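/- arXiv:cs/0508119 — 2 statements merged into one kernel-verified Lean document; each statement's English description precedes it below -/
import Mathlib

section
/- Let (Ȳ,Z̄,V) be random variables over finite alphabets with joint pmf p'(ȳ,v)·∏_{m=1}^{M'} q'_m(z_m|y_m). Then for any two disjoint nonempty sets I, I' ⊆ {1,…,M'}: I(Ȳ_{I∪I'};Z̄_{I∪I'}|Z̄_{(I∪I')^c},V) = I(Ȳ_I;Z̄_I|Z̄_{(I∪I')^c},V) + I(Ȳ_{I'};Z̄_{I'}|Z̄_{I'^c},V). -/
open Finset
open scoped Classical

noncomputable section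

/-- The distribution (pmf) of the random variable `X` under the pmf `P` on the finite
sample space `Ω`. -/
def dist {Ω α : Type*} [Fintype Ω] [Fintype α] (P : Ω → ℝ) (X : Ω → α) (a : α) : ℝ :=
  ∑ ω, if X ω = a then P ω else 0

/-- Shannon entropy (base 2) of the random variable `X` under the pmf `P`. -/
def Hent {Ω α : Type*} [Fintype Ω] [Fintype α] (P : Ω → ℝ) (X : Ω → α) : ℝ :=
  -∑ a, dist P X a * Real.logb 2 (dist P X a)

/-- Conditional entropy `H(X | Y)`. -/
def condEnt {Ω α β : Type*} [Fintype Ω] [Fintype α] [Fintype β]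
    (P : Ω → ℝ) (X : Ω → α) (Y : Ω → β) : ℝ :=
  Hent P (fun ω => (X ω, Y ω)) - Hent P Y

/-- Conditional mutual information `I(X ; Y | Z)`. -/
def condMI {Ω α β γ : Type*} [Fintype Ω] [Fintype α] [Fintype β] [Fintype γ]
    (P : Ω → ℝ) (X : Ω → α) (Y : Ω → β) (Z : Ω → γ) : ℝ :=
  Hent P (fun ω => (X ω, Z ω)) + Hent P (fun ω => (Y ω, Z ω))
    - Hent P (fun ω => (X ω, Y ω, Z ω)) - Hent P Z

/-- The ε-strongly typical set condition for a sequence `xs` with respect to pmf `p`: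
`|N(a|xs)/n − p(a)| < ε/|α|` for every letter `a`. -/
def StronglyTypical {α : Type*} [Fintype α] (p : α → ℝ) {n : ℕ} (xs : Fin n → α)
    (ε : ℝ) : Prop :=
  ∀ a : α, |((Finset.univ.filter fun k => xs k = a).card : ℝ) / n - p a|
    < ε / Fintype.card α

section YZV

variable {M' : ℕ}

/-- Canonical sample space for `(Ȳ, Z̄, V)`. -/
abbrev Samp (𝒴 𝒵 : Fin M' → Type*) (V : Type*) : Type _ :=
  (∀ i, 𝒴 i) × (∀ i, 𝒵 i) × V

variable {𝒴 𝒵 : Fin M' → Type*} [∀ i, Fintype (𝒴 i)] [∀ i, Fintype (𝒵 i)]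
  {V : Type*} [Fintype V]

/-- The joint pmf `p'(ȳ,v) · ∏ₘ q'ₘ(zₘ | yₘ)` on the canonical sample space: conditionally
on `(Ȳ,V)` the `Zₘ` are mutually independent and `Zₘ` depends only on `Yₘ`. -/
def Pjoint (p' : (∀ i, 𝒴 i) × V → ℝ) (q : ∀ m, 𝒴 m → 𝒵 m → ℝ) :
    Samp 𝒴 𝒵 V → ℝ :=
  fun ω => p' (ω.1, ω.2.2) * ∏ m, q m (ω.1 m) (ω.2.1 m)

/-- `Ȳ_I`. -/
def Ybar (I : Finset (Fin M')) : Samp 𝒴 𝒵 V → (∀ i : I, 𝒴 i.1) := fun ω i => ω.1 i.1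

/-- `Z̄_I`. -/
def Zbar (I : Finset (Fin M')) : Samp 𝒴 𝒵 V → (∀ i : I, 𝒵 i.1) := fun ω i => ω.2.1 i.1

/-- The pair `(Z̄_I, V)` used as a conditioning variable. -/
def ZbarV (I : Finset (Fin M')) : Samp 𝒴 𝒵 V → (∀ i : I, 𝒵 i.1) × V :=
  fun ω => (fun i => ω.2.1 i.1, ω.2.2)

/-- Membership in the region `B*`: `I(Ȳ_I; Z̄_I | Z̄_{Iᶜ}, V) ≤ Σ_{i∈I} R_i` for every
nonempty `I ⊆ {1,…,M'}`. -/
def memBstar (p' : (∀ i, 𝒴 i) × V → ℝ) (q : ∀ m, 𝒴 m → 𝒵 m → ℝ)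
    (R : Fin M' → ℝ) : Prop :=
  ∀ I : Finset (Fin M'), I.Nonempty →
    condMI (Pjoint p' q) (Ybar I) (Zbar I) (ZbarV Iᶜ) ≤ ∑ i ∈ I, R i

end YZV

section MyAux

variable {Ω α β : Type*} [Fintype Ω] [Fintype α] [Fintype β]

lemma my_dist_def (P : Ω → ℝ) (X : Ω → α) (a : α) :
    dist P X a = ∑ ω, if X ω = a then P ω else 0 := rfl

lemma my_lotus (P : Ω → ℝ) (X : Ω → α) (f : α → ℝ) :
    ∑ a, dist P X a * f a = ∑ ω, P ω * f (X ω) := by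
  simp only [my_dist_def, Finset.sum_mul]
  rw [Finset.sum_comm]
  refine Finset.sum_congr rfl fun ω _ => ?_
  rw [Finset.sum_congr rfl (fun a _ => by rw [ite_mul, zero_mul])]
  simp [Finset.sum_ite_eq Finset.univ (X ω) (fun a => P ω * f a)]

lemma my_Hent_eq (P : Ω → ℝ) (X : Ω → α) :
    Hent P X = -∑ ω, P ω * Real.logb 2 (dist P X (X ω)) := by
  rw [Hent, my_lotus]

lemma my_dist_nonneg {P : Ω → ℝ} (hP : ∀ ω, 0 ≤ P ω) (X : Ω → α) (a : α) :
    0 ≤ dist P X a := by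
  refine Finset.sum_nonneg fun ω _ => ?_
  split <;> [exact hP ω; exact le_rfl]

lemma my_le_dist {P : Ω → ℝ} (hP : ∀ ω, 0 ≤ P ω) (X : Ω → α) (ω : Ω) :
    P ω ≤ dist P X (X ω) := by
  have := Finset.single_le_sum (f := fun ω' => if X ω' = X ω then P ω' else 0)
    (fun i _ => by split <;> [exact hP i; exact le_rfl]) (Finset.mem_univ ω)
  simpa [my_dist_def] using this

lemma my_Hent_comp (P : Ω → ℝ) (X : Ω → α) (g : α → β) (hg : Function.Injective g) :
    Hent P (fun ω => g (X ω)) = Hent P X := by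
  have hd : ∀ a, dist P (fun ω => g (X ω)) (g a) = dist P X a := by
    intro a
    exact Finset.sum_congr rfl fun ω _ => by rw [hg.eq_iff]
  have h0 : ∀ b, b ∉ Finset.univ.image g → dist P (fun ω => g (X ω)) b = 0 := by
    intro b hb
    refine Finset.sum_eq_zero fun ω _ => if_neg fun h => hb ?_
    exact Finset.mem_image.mpr ⟨X ω, Finset.mem_univ _, h⟩
  unfold Hent
  congr 1
  rw [← Finset.sum_subset (Finset.subset_univ (Finset.univ.image g))
      (fun b _ hb => by rw [h0 b hb]; simp)]
  rw [Finset.sum_image (fun a _ a' _ h => hg h)]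
  exact Finset.sum_congr rfl fun a _ => by rw [hd]

end MyAux
section MyAux2

variable {M' : ℕ} {𝒴 𝒵 : Fin M' → Type*} [∀ i, Fintype (𝒴 i)] [∀ i, Fintype (𝒵 i)]
  {V : Type*} [Fintype V]

lemma my_G1 (g : ∀ m, 𝒵 m → ℝ) (hg1 : ∀ m, ∑ z, g m z = 1)
    (T : Finset (Fin M')) (zt : ∀ i : T, 𝒵 i.1) :
    (∑ zb : ∀ i, 𝒵 i, if (fun i : T => zb i.1) = zt then ∏ m, g m (zb m) else 0)
      = ∏ i : T, g i.1 (zt i) := by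
  have key : ∀ zb : ∀ i, 𝒵 i,
      (if (fun i : T => zb i.1) = zt then ∏ m, g m (zb m) else 0)
        = ∏ m, (if hm : m ∈ T then (if zb m = zt ⟨m, hm⟩ then g m (zb m) else 0)
            else g m (zb m)) := by
    intro zb
    by_cases h : (fun i : T => zb i.1) = zt
    · rw [if_pos h]
      refine Finset.prod_congr rfl fun m _ => ?_
      by_cases hm : m ∈ T
      · rw [dif_pos hm, if_pos (congrFun h ⟨m, hm⟩)]
      · rw [dif_neg hm]
    · rw [if_neg h]
      obtain ⟨i, hi⟩ := Function.ne_iff.mp h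
      refine (Finset.prod_eq_zero (Finset.mem_univ i.1) ?_).symm
      rw [dif_pos i.2, if_neg hi]
  rw [Finset.sum_congr rfl fun zb _ => key zb]
  rw [show (Finset.univ : Finset (∀ i, 𝒵 i)) = Fintype.piFinset (fun i => Finset.univ) by
    rw [Fintype.piFinset_univ]]
  rw [← Finset.prod_univ_sum (fun i => (Finset.univ : Finset (𝒵 i)))
    (fun m z => if hm : m ∈ T then (if z = zt ⟨m, hm⟩ then g m z else 0) else g m z)]
  have hs : ∀ m, (∑ z, if hm : m ∈ T then (if z = zt ⟨m, hm⟩ then g m z else 0) else g m z)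
      = if hm : m ∈ T then g m (zt ⟨m, hm⟩) else 1 := by
    intro m
    by_cases hm : m ∈ T
    · simp only [dif_pos hm]
      simpa using Finset.sum_ite_eq' Finset.univ (zt ⟨m, hm⟩) (g m)
    · simp only [dif_neg hm]
      exact hg1 m
  rw [Finset.prod_congr rfl fun m _ => hs m]
  rw [← Finset.prod_subset (Finset.subset_univ T) (fun m _ hm => dif_neg hm)]
  rw [← Finset.prod_attach T (fun m => if hm : m ∈ T then g m (zt ⟨m, hm⟩) else 1)]
  rw [Finset.univ_eq_attach]
  exact Finset.prod_congr rfl fun i _ => by rw [dif_pos i.2]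

lemma my_CF1 (p' : (∀ i, 𝒴 i) × V → ℝ) (q : ∀ m, 𝒴 m → 𝒵 m → ℝ)
    (hq1 : ∀ m y, ∑ z, q m y z = 1)
    (S T : Finset (Fin M')) (ys : ∀ i : S, 𝒴 i.1) (zt : ∀ i : T, 𝒵 i.1) (v : V) :
    dist (Pjoint p' q) (fun ω => (Ybar S ω, Zbar T ω, ω.2.2)) (ys, zt, v)
      = ∑ yb : ∀ i, 𝒴 i, (if (fun i : S => yb i.1) = ys then
          p' (yb, v) * ∏ i : T, q i.1 (yb i.1) (zt i) else 0) := by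
  rw [my_dist_def]
  rw [Fintype.sum_prod_type]
  refine Finset.sum_congr rfl fun yb _ => ?_
  rw [Fintype.sum_prod_type]
  have hY : ∀ ω : Samp 𝒴 𝒵 V, Ybar S ω = fun i : S => ω.1 i.1 := fun _ => rfl
  have hZ : ∀ ω : Samp 𝒴 𝒵 V, Zbar T ω = fun i : T => ω.2.1 i.1 := fun _ => rfl
  simp only [Prod.mk.injEq, hY, hZ, Pjoint]
  have step1 : ∀ zb : ∀ i, 𝒵 i,
      (∑ v' : V, if ((fun i : S => yb i.1) = ys ∧ (fun i : T => zb i.1) = zt ∧ v' = v)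
          then p' (yb, v') * ∏ m, q m (yb m) (zb m) else 0)
        = if ((fun i : S => yb i.1) = ys ∧ (fun i : T => zb i.1) = zt)
          then p' (yb, v) * ∏ m, q m (yb m) (zb m) else 0 := by
    intro zb
    rw [Finset.sum_congr rfl (fun v' _ => show _ = if v' = v then (if ((fun i : S => yb i.1) = ys ∧ (fun i : T => zb i.1) = zt) then p' (yb, v') * ∏ m, q m (yb m) (zb m) else 0) else 0 by
      split_ifs <;> tauto)]
    rw [Finset.sum_ite_eq' Finset.univ v _]
    simp
  rw [Finset.sum_congr rfl fun zb _ => step1 zb]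
  by_cases hA : (fun i : S => yb i.1) = ys
  · simp only [hA, true_and, if_pos]
    rw [Finset.sum_congr rfl (fun zb _ => show _ = p' (yb, v) * (if (fun i : T => zb i.1) = zt then ∏ m, q m (yb m) (zb m) else 0) by split_ifs <;> simp)]
    rw [← Finset.mul_sum, my_G1 (fun m => q m (yb m)) (fun m => hq1 m (yb m)) T zt]
  · simp only [hA, false_and, if_false, Finset.sum_const_zero, if_neg hA]

end MyAux2
section MyAux3

variable {M' : ℕ} {𝒴 𝒵 : Fin M' → Type*} [∀ i, Fintype (𝒴 i)] [∀ i, Fintype (𝒵 i)]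
  {V : Type*} [Fintype V]

lemma my_Fact (p' : (∀ i, 𝒴 i) × V → ℝ) (q : ∀ m, 𝒴 m → 𝒵 m → ℝ)
    (hq1 : ∀ m y, ∑ z, q m y z = 1)
    (S W : Finset (Fin M')) (hSW : Disjoint S W) (ω : Samp 𝒴 𝒵 V) :
    dist (Pjoint p' q) (fun ω' => (Ybar S ω', Zbar (S ∪ W) ω', ω'.2.2))
        (Ybar S ω, Zbar (S ∪ W) ω, ω.2.2)
      = dist (Pjoint p' q) (fun ω' => (Ybar S ω', Zbar W ω', ω'.2.2))
          (Ybar S ω, Zbar W ω, ω.2.2)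
        * ∏ m ∈ S, q m (ω.1 m) (ω.2.1 m) := by
  rw [my_CF1 p' q hq1 S (S ∪ W) _ _ _, my_CF1 p' q hq1 S W _ _ _]
  rw [Finset.sum_mul]
  refine Finset.sum_congr rfl fun yb _ => ?_
  by_cases h : (fun i : S => yb i.1) = Ybar S ω
  · rw [if_pos h, if_pos h]
    have e1 : (∏ i : ↥(S ∪ W), q i.1 (yb i.1) (Zbar (S ∪ W) ω i))
        = ∏ m ∈ S ∪ W, q m (yb m) (ω.2.1 m) :=
      Finset.prod_coe_sort (S ∪ W) (fun m => q m (yb m) (ω.2.1 m))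
    have e3 : (∏ i : ↥W, q i.1 (yb i.1) (Zbar W ω i))
        = ∏ m ∈ W, q m (yb m) (ω.2.1 m) :=
      Finset.prod_coe_sort W (fun m => q m (yb m) (ω.2.1 m))
    have e2 : ∏ m ∈ S, q m (yb m) (ω.2.1 m) = ∏ m ∈ S, q m (ω.1 m) (ω.2.1 m) :=
      Finset.prod_congr rfl fun m hm => by rw [congrFun h ⟨m, hm⟩]; rfl
    rw [e1, e3, Finset.prod_union hSW, e2]
    ring
  · rw [if_neg h, if_neg h, zero_mul]

lemma my_Pjoint_nonneg (p' : (∀ i, 𝒴 i) × V → ℝ) (q : ∀ m, 𝒴 m → 𝒵 m → ℝ)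
    (hp'0 : ∀ yv, 0 ≤ p' yv) (hq0 : ∀ m y z, 0 ≤ q m y z) (ω : Samp 𝒴 𝒵 V) :
    0 ≤ Pjoint p' q ω :=
  mul_nonneg (hp'0 _) (Finset.prod_nonneg fun m _ => hq0 m _ _)

lemma my_Kprime (p' : (∀ i, 𝒴 i) × V → ℝ) (q : ∀ m, 𝒴 m → 𝒵 m → ℝ)
    (hp'0 : ∀ yv, 0 ≤ p' yv)
    (hq0 : ∀ m y z, 0 ≤ q m y z) (hq1 : ∀ m y, ∑ z, q m y z = 1)
    (S W : Finset (Fin M')) (hSW : Disjoint S W) :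
    Hent (Pjoint p' q) (fun ω => (Ybar S ω, Zbar (S ∪ W) ω, ω.2.2))
        - Hent (Pjoint p' q) (fun ω => (Ybar S ω, Zbar W ω, ω.2.2))
      = ∑ m ∈ S, (-∑ ω : Samp 𝒴 𝒵 V,
          Pjoint p' q ω * Real.logb 2 (q m (ω.1 m) (ω.2.1 m))) := by
  set P := Pjoint p' q with hP
  have hP0 : ∀ ω, 0 ≤ P ω := my_Pjoint_nonneg p' q hp'0 hq0
  rw [my_Hent_eq, my_Hent_eq]
  have key : ∀ ω : Samp 𝒴 𝒵 V,
      P ω * Real.logb 2 (dist P (fun ω' => (Ybar S ω', Zbar (S ∪ W) ω', ω'.2.2))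
          ((Ybar S ω, Zbar (S ∪ W) ω, ω.2.2)))
        - P ω * Real.logb 2 (dist P (fun ω' => (Ybar S ω', Zbar W ω', ω'.2.2))
          ((Ybar S ω, Zbar W ω, ω.2.2)))
      = ∑ m ∈ S, P ω * Real.logb 2 (q m (ω.1 m) (ω.2.1 m)) := by
    intro ω
    by_cases h0 : P ω = 0
    · simp [h0]
    · have hq' : ∀ m, q m (ω.1 m) (ω.2.1 m) ≠ 0 := by
        intro m hm
        exact h0 (by rw [hP, Pjoint, Finset.prod_eq_zero (Finset.mem_univ m) hm, mul_zero])
      have hB : dist P (fun ω' => (Ybar S ω', Zbar W ω', ω'.2.2))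
          ((Ybar S ω, Zbar W ω, ω.2.2)) ≠ 0 := by
        have := my_le_dist hP0 (fun ω' => (Ybar S ω', Zbar W ω', ω'.2.2)) ω
        intro hz
        rw [hz] at this
        exact h0 (le_antisymm this (hP0 ω))
      have hprod : (∏ m ∈ S, q m (ω.1 m) (ω.2.1 m)) ≠ 0 :=
        Finset.prod_ne_zero_iff.mpr fun m _ => hq' m
      rw [my_Fact p' q hq1 S W hSW ω, Real.logb_mul hB hprod,
        Real.logb_prod S _ (fun m _ => hq' m)]
      rw [mul_add, Finset.mul_sum]
      ring
  rw [neg_sub_neg, ← Finset.sum_sub_distrib]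
  rw [Finset.sum_congr rfl fun ω _ => by rw [← neg_sub, key ω]]
  rw [Finset.sum_neg_distrib, Finset.sum_comm, ← Finset.sum_neg_distrib]

end MyAux3
section MyAux4

variable {M' : ℕ} {𝒴 𝒵 : Fin M' → Type*} [∀ i, Fintype (𝒴 i)] [∀ i, Fintype (𝒵 i)]
  {V : Type*} [Fintype V]

/-- Combine restrictions to `T` and `U` into a restriction to `T ∪ U`. -/
def myCombine (T U : Finset (Fin M')) (zt : ∀ i : T, 𝒵 i.1) (zu : ∀ i : U, 𝒵 i.1) :
    ∀ i : ↥(T ∪ U), 𝒵 i.1 := fun i =>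
  if h : i.1 ∈ T then zt ⟨i.1, h⟩ else zu ⟨i.1, (Finset.mem_union.mp i.2).resolve_left h⟩

lemma myCombine_inj {T U : Finset (Fin M')} (hTU : Disjoint T U)
    {zt zt' : ∀ i : T, 𝒵 i.1} {zu zu' : ∀ i : U, 𝒵 i.1}
    (h : myCombine T U zt zu = myCombine T U zt' zu') : zt = zt' ∧ zu = zu' := by
  constructor
  · funext i
    have h2 := congrFun h ⟨i.1, Finset.mem_union_left U i.2⟩
    simpa [myCombine, dif_pos i.2] using h2
  · funext i
    have hiT : i.1 ∉ T := Finset.disjoint_right.mp hTU i.2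
    have h2 := congrFun h ⟨i.1, Finset.mem_union_right T i.2⟩
    simpa [myCombine, dif_neg hiT] using h2

lemma myCombine_spec (T U : Finset (Fin M')) (ω : Samp 𝒴 𝒵 V) :
    myCombine T U (Zbar T ω) (Zbar U ω) = Zbar (T ∪ U) ω := by
  funext i
  simp only [myCombine, Zbar]
  split <;> rfl

lemma my_condMI_expand (p' : (∀ i, 𝒴 i) × V → ℝ) (q : ∀ m, 𝒴 m → 𝒵 m → ℝ)
    (S T U : Finset (Fin M')) (hTU : Disjoint T U) :
    condMI (Pjoint p' q) (Ybar S) (Zbar T) (ZbarV U)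
      = Hent (Pjoint p' q) (fun ω => (Ybar S ω, Zbar U ω, ω.2.2))
        + Hent (Pjoint p' q) (fun ω => (Zbar (T ∪ U) ω, ω.2.2))
        - Hent (Pjoint p' q) (fun ω => (Ybar S ω, Zbar (T ∪ U) ω, ω.2.2))
        - Hent (Pjoint p' q) (fun ω => (Zbar U ω, ω.2.2)) := by
  have t2 : Hent (Pjoint p' q) (fun ω => (Zbar T ω, ZbarV U ω))
      = Hent (Pjoint p' q) (fun ω => (Zbar (T ∪ U) ω, ω.2.2)) := by
    have hg : Function.Injective
        (fun p : (∀ i : T, 𝒵 i.1) × ((∀ i : U, 𝒵 i.1) × V) =>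
          ((myCombine T U p.1 p.2.1 : ∀ i : ↥(T ∪ U), 𝒵 i.1), p.2.2)) := by
      intro a b hab
      simp only [Prod.mk.injEq] at hab
      obtain ⟨h1, h2⟩ := myCombine_inj hTU hab.1
      exact Prod.ext h1 (Prod.ext h2 hab.2)
    have := my_Hent_comp (Pjoint p' q) (fun ω => (Zbar T ω, ZbarV U ω)) _ hg
    rw [← this]
    congr 1
    funext ω
    exact Prod.ext (myCombine_spec T U ω) rfl
  have t3 : Hent (Pjoint p' q) (fun ω => (Ybar S ω, Zbar T ω, ZbarV U ω))
      = Hent (Pjoint p' q) (fun ω => (Ybar S ω, Zbar (T ∪ U) ω, ω.2.2)) := by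
    have hg : Function.Injective
        (fun p : (∀ i : S, 𝒴 i.1) × ((∀ i : T, 𝒵 i.1) × ((∀ i : U, 𝒵 i.1) × V)) =>
          (p.1, (myCombine T U p.2.1 p.2.2.1 : ∀ i : ↥(T ∪ U), 𝒵 i.1), p.2.2.2)) := by
      intro a b hab
      simp only [Prod.mk.injEq] at hab
      obtain ⟨h1, h2⟩ := myCombine_inj hTU hab.2.1
      exact Prod.ext hab.1 (Prod.ext h1 (Prod.ext h2 hab.2.2))
    have := my_Hent_comp (Pjoint p' q) (fun ω => (Ybar S ω, Zbar T ω, ZbarV U ω)) _ hg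
    rw [← this]
    congr 1
    funext ω
    exact Prod.ext rfl (Prod.ext (myCombine_spec T U ω) rfl)
  rw [condMI, t2, t3]
  rfl

end MyAux4

/-- Lemma B.2 (le:chain) of the paper: for disjoint nonempty `I, I' ⊆ {1,…,M'}`,
`I(Ȳ_{I∪I'}; Z̄_{I∪I'} | Z̄_{(I∪I')ᶜ}, V)
  = I(Ȳ_I; Z̄_I | Z̄_{(I∪I')ᶜ}, V) + I(Ȳ_{I'}; Z̄_{I'} | Z̄_{I'ᶜ}, V)`. -/
theorem statement_4 (M' : ℕ) (𝒴 𝒵 : Fin M' → Type) [∀ i, Fintype (𝒴 i)]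
    [∀ i, Fintype (𝒵 i)] (V : Type) [Fintype V]
    (p' : (∀ i, 𝒴 i) × V → ℝ) (q : ∀ m, 𝒴 m → 𝒵 m → ℝ)
    (hp'0 : ∀ yv, 0 ≤ p' yv) (hp'1 : ∑ yv, p' yv = 1)
    (hq0 : ∀ m y z, 0 ≤ q m y z) (hq1 : ∀ m y, ∑ z, q m y z = 1)
    (I I' : Finset (Fin M')) (hI : I.Nonempty) (hI' : I'.Nonempty)
    (hII' : Disjoint I I') :
    condMI (Pjoint p' q) (Ybar (I ∪ I')) (Zbar (I ∪ I')) (ZbarV (I ∪ I')ᶜ)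
      = condMI (Pjoint p' q) (Ybar I) (Zbar I) (ZbarV (I ∪ I')ᶜ)
        + condMI (Pjoint p' q) (Ybar I') (Zbar I') (ZbarV I'ᶜ) := by
  have hJ : Disjoint (I ∪ I') (I ∪ I')ᶜ := disjoint_compl_right
  have hIJc : Disjoint I (I ∪ I')ᶜ := hJ.mono_left Finset.subset_union_left
  have hI'c : Disjoint I' I'ᶜ := disjoint_compl_right
  have e1 : I ∪ I' ∪ (I ∪ I')ᶜ = Finset.univ := Finset.union_compl _
  have e2 : I' ∪ I'ᶜ = Finset.univ := Finset.union_compl _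
  have e3 : I ∪ (I ∪ I')ᶜ = I'ᶜ := by
    ext x
    simp only [Finset.mem_union, Finset.mem_compl, not_or]
    have hd : x ∈ I → x ∉ I' := fun h h' => Finset.disjoint_left.mp hII' h h'
    tauto
  rw [my_condMI_expand p' q (I ∪ I') (I ∪ I') ((I ∪ I')ᶜ) hJ,
    my_condMI_expand p' q I I ((I ∪ I')ᶜ) hIJc,
    my_condMI_expand p' q I' I' I'ᶜ hI'c]
  have k1 := my_Kprime p' q hp'0 hq0 hq1 (I ∪ I') (I ∪ I')ᶜ hJ
  have k2 := my_Kprime p' q hp'0 hq0 hq1 I ((I ∪ I')ᶜ) hIJc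
  have k3 := my_Kprime p' q hp'0 hq0 hq1 I' I'ᶜ hI'c
  rw [e1] at k1
  rw [e3] at k2
  rw [e2] at k3
  rw [e1, e2, e3]
  have hsum : ∑ m ∈ I ∪ I', (-∑ ω : Samp 𝒴 𝒵 V,
        Pjoint p' q ω * Real.logb 2 (q m (ω.1 m) (ω.2.1 m)))
      = (∑ m ∈ I, (-∑ ω : Samp 𝒴 𝒵 V,
          Pjoint p' q ω * Real.logb 2 (q m (ω.1 m) (ω.2.1 m))))
        + ∑ m ∈ I', (-∑ ω : Samp 𝒴 𝒵 V,
          Pjoint p' q ω * Real.logb 2 (q m (ω.1 m) (ω.2.1 m))) :=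
    Finset.sum_union hII'
  linarith
end
end

section
/- Let (Ȳ,Z̄,V) be random variables over finite alphabets with joint pmf p'(ȳ,v)·∏_{m=1}^{M'} q'_m(z_m|y_m). Then for any nonempty set Î ⊆ {1,…,M'} and any two disjoint nonempty sets I, I' ⊆ Î: I(Ȳ_{I∪I'};Z̄_{I∪I'}|Z̄_{Î\(I∪I')},V) = I(Ȳ_I;Z̄_I|Z̄_{Î\(I∪I')},V) + I(Ȳ_{I'};Z̄_{I'}|Z̄_{Î\I'},V). -/
open Finset
open scoped Classical

noncomputable section

/- ===== auxiliary lemmas ===== -/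

section GeneralAux
variable {Ω α β : Type*} [Fintype Ω] [Fintype α] [Fintype β]

lemma sum_dist_mul' (P : Ω → ℝ) (X : Ω → α) (f : α → ℝ) :
    ∑ a, _root_.dist P X a * f a = ∑ ω, P ω * f (X ω) := by
  simp only [_root_.dist, Finset.sum_mul, ite_mul, zero_mul]
  rw [Finset.sum_comm]
  simp

lemma Hent_eq' (P : Ω → ℝ) (X : Ω → α) :
    Hent P X = -∑ ω, P ω * Real.logb 2 (_root_.dist P X (X ω)) := by
  rw [Hent, sum_dist_mul']

lemma le_dist' (P : Ω → ℝ) (hP : ∀ ω, 0 ≤ P ω) (X : Ω → α) (ω : Ω) :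
    P ω ≤ _root_.dist P X (X ω) := by
  unfold _root_.dist
  refine Finset.single_le_sum (f := fun ω' => if X ω' = X ω then P ω' else 0)
    (fun i _ => by split_ifs <;> simp [hP]) (Finset.mem_univ ω) |>.trans_eq' (by simp)

lemma Hent_comp_inj (P : Ω → ℝ) (X : Ω → α) (e : α → β) (he : Function.Injective e) :
    Hent P (fun ω => e (X ω)) = Hent P X := by
  unfold Hent
  congr 1
  have hd : ∀ a, _root_.dist P (fun ω => e (X ω)) (e a) = _root_.dist P X a := fun a => by
    unfold _root_.dist; exact Finset.sum_congr rfl fun ω _ => by rw [he.eq_iff]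
  have h0 : ∀ b ∈ Finset.univ, b ∉ Finset.univ.image e →
      _root_.dist P (fun ω => e (X ω)) b * Real.logb 2 (_root_.dist P (fun ω => e (X ω)) b) = 0 := by
    intro b _ hb
    have : _root_.dist P (fun ω => e (X ω)) b = 0 := by
      unfold _root_.dist
      refine Finset.sum_eq_zero fun ω _ => if_neg fun h => hb ?_
      exact Finset.mem_image.mpr ⟨X ω, Finset.mem_univ _, h⟩
    simp [this]
  rw [← Finset.sum_subset (Finset.subset_univ (Finset.univ.image e)) h0,
    Finset.sum_image (fun a _ b _ h => he h)]
  exact Finset.sum_congr rfl fun a _ => by rw [hd]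

lemma Hent_pair' (P : Ω → ℝ) (hP : ∀ ω, 0 ≤ P ω) (X : Ω → α) (W : Ω → β) (g : α → β → ℝ)
    (hfac : ∀ a b, _root_.dist P (fun ω => (X ω, W ω)) (a, b) = _root_.dist P X a * g a b) :
    Hent P (fun ω => (X ω, W ω)) = Hent P X - ∑ ω, P ω * Real.logb 2 (g (X ω) (W ω)) := by
  rw [Hent_eq', Hent_eq']
  have key : ∑ ω, P ω * Real.logb 2 (_root_.dist P (fun ω => (X ω, W ω)) (X ω, W ω))
      = ∑ ω, P ω * Real.logb 2 (_root_.dist P X (X ω))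
        + ∑ ω, P ω * Real.logb 2 (g (X ω) (W ω)) := by
    rw [← Finset.sum_add_distrib]
    refine Finset.sum_congr rfl fun ω _ => ?_
    rcases eq_or_ne (P ω) 0 with h | h
    · simp [h]
    have h1 : 0 < _root_.dist P X (X ω) :=
      lt_of_lt_of_le (lt_of_le_of_ne (hP ω) (Ne.symm h)) (le_dist' P hP X ω)
    have h2 : 0 < _root_.dist P (fun ω => (X ω, W ω)) (X ω, W ω) :=
      lt_of_lt_of_le (lt_of_le_of_ne (hP ω) (Ne.symm h)) (le_dist' P hP (fun ω => (X ω, W ω)) ω)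
    have hg : g (X ω) (W ω) ≠ 0 := by
      intro h0
      rw [hfac, h0, mul_zero] at h2; exact lt_irrefl 0 h2
    rw [hfac, Real.logb_mul h1.ne' hg, mul_add]
  rw [key]; ring

end GeneralAux

section YZVAux
variable {M' : ℕ} {𝒴 𝒵 : Fin M' → Type*} [∀ i, Fintype (𝒴 i)] [∀ i, Fintype (𝒵 i)]
  {V : Type*} [Fintype V]

lemma zsum (q : ∀ m, 𝒴 m → 𝒵 m → ℝ) (hq1 : ∀ m y, ∑ z, q m y z = 1)
    (y : ∀ i, 𝒴 i) (A : Finset (Fin M')) (w : ∀ i : A, 𝒵 i.1) :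
    ∑ z : ∀ i, 𝒵 i, (if (fun i : A => z i.1) = w then ∏ m, q m (y m) (z m) else 0)
      = ∏ m : A, q m.1 (y m.1) (w m) := by
  set e := Equiv.piEquivPiSubtypeProd (fun i => i ∈ A) 𝒵 with he
  rw [← Equiv.sum_comp e.symm, Fintype.sum_prod_type]
  have hres : ∀ (u1 : ∀ i : {x // x ∈ A}, 𝒵 i) (u2 : ∀ i : {x // ¬ x ∈ A}, 𝒵 i),
      (fun i : A => (e.symm (u1, u2)) i.1) = u1 := by
    intro u1 u2
    funext i
    simp [he, Equiv.piEquivPiSubtypeProd, i.2]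
  have hprod : ∀ (u1 : ∀ i : {x // x ∈ A}, 𝒵 i) (u2 : ∀ i : {x // ¬ x ∈ A}, 𝒵 i),
      ∏ m, q m (y m) ((e.symm (u1, u2)) m)
        = (∏ m : {x // x ∈ A}, q m.1 (y m.1) (u1 m))
          * ∏ m : {x // ¬ x ∈ A}, q m.1 (y m.1) (u2 m) := by
    intro u1 u2
    rw [← Fintype.prod_subtype_mul_prod_subtype (fun i => i ∈ A)
      (fun m => q m (y m) ((e.symm (u1, u2)) m))]
    congr 1
    · exact Finset.prod_congr (by congr!) fun m _ => by
        simp [he, Equiv.piEquivPiSubtypeProd, m.2]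
    · exact Finset.prod_congr (by congr!) fun m _ => by
        simp [he, Equiv.piEquivPiSubtypeProd, m.2]
  trans ∑ u1 : ∀ i : {x // x ∈ A}, 𝒵 i, ∑ u2 : ∀ i : {x // ¬ x ∈ A}, 𝒵 i,
      (if u1 = w then (∏ m : {x // x ∈ A}, q m.1 (y m.1) (u1 m))
        * ∏ m : {x // ¬ x ∈ A}, q m.1 (y m.1) (u2 m) else 0)
  · exact Finset.sum_congr rfl fun u1 _ => Finset.sum_congr rfl fun u2 _ => by
      rw [hres, hprod]
  trans ∑ u2 : ∀ i : {x // ¬ x ∈ A}, 𝒵 i,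
      (∏ m : {x // x ∈ A}, q m.1 (y m.1) (w m)) * ∏ m : {x // ¬ x ∈ A}, q m.1 (y m.1) (u2 m)
  · rw [Finset.sum_comm]
    refine Finset.sum_congr rfl fun u2 _ => ?_
    rw [Finset.sum_ite_eq' Finset.univ w]
    simp
  rw [← Finset.mul_sum]
  have h1 : ∑ u2 : ∀ i : {x // ¬ x ∈ A}, 𝒵 i, ∏ m : {x // ¬ x ∈ A}, q m.1 (y m.1) (u2 m)
      = 1 := by
    rw [← Fintype.prod_sum]
    simp [hq1]
  rw [h1, mul_one]

lemma zsum2 (q : ∀ m, 𝒴 m → 𝒵 m → ℝ) (hq1 : ∀ m y, ∑ z, q m y z = 1)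
    (y : ∀ i, 𝒴 i) (A B : Finset (Fin M')) (hAB : Disjoint A B)
    (w : ∀ i : A, 𝒵 i.1) (u : ∀ i : B, 𝒵 i.1) :
    ∑ z : ∀ i, 𝒵 i, (if ((fun i : A => z i.1) = w ∧ (fun i : B => z i.1) = u)
        then ∏ m, q m (y m) (z m) else 0)
      = (∏ m : A, q m.1 (y m.1) (w m)) * ∏ m : B, q m.1 (y m.1) (u m) := by
  set w' : ∀ i : (A ∪ B : Finset (Fin M')), 𝒵 i.1 := fun i =>
    if h : i.1 ∈ A then w ⟨i.1, h⟩ else u ⟨i.1, (Finset.mem_union.mp i.2).resolve_left h⟩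
    with hw'
  have hiff : ∀ z : ∀ i, 𝒵 i,
      ((fun i : A => z i.1) = w ∧ (fun i : B => z i.1) = u)
        ↔ (fun i : (A ∪ B : Finset (Fin M')) => z i.1) = w' := by
    intro z
    constructor
    · rintro ⟨h1, h2⟩
      funext i
      by_cases h : i.1 ∈ A
      · simpa [hw', h] using congrFun h1 ⟨i.1, h⟩
      · have hB : i.1 ∈ B := (Finset.mem_union.mp i.2).resolve_left h
        simpa [hw', h] using congrFun h2 ⟨i.1, hB⟩
    · intro h
      constructor
      · funext i
        have := congrFun h ⟨i.1, Finset.mem_union_left _ i.2⟩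
        simpa [hw', i.2] using this
      · funext i
        have hnA : i.1 ∉ A := fun hA => (Finset.disjoint_left.mp hAB) hA i.2
        have := congrFun h ⟨i.1, Finset.mem_union_right _ i.2⟩
        simpa [hw', hnA] using this
  have step : ∑ z : ∀ i, 𝒵 i, (if ((fun i : A => z i.1) = w ∧ (fun i : B => z i.1) = u)
        then ∏ m, q m (y m) (z m) else 0)
      = ∏ m : (A ∪ B : Finset (Fin M')), q m.1 (y m.1) (w' m) := by
    rw [← zsum q hq1 y (A ∪ B) w']
    exact Finset.sum_congr rfl fun z _ => by rw [if_congr (hiff z) rfl rfl]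
  rw [step]
  set F : Fin M' → ℝ := fun m =>
    if h : m ∈ A then q m (y m) (w ⟨m, h⟩)
    else if h : m ∈ B then q m (y m) (u ⟨m, h⟩) else 1 with hF
  have h1 : ∏ m : (A ∪ B : Finset (Fin M')), q m.1 (y m.1) (w' m)
      = ∏ m ∈ A ∪ B, F m := by
    rw [← Finset.prod_coe_sort (A ∪ B) F]
    refine Finset.prod_congr rfl fun m _ => ?_
    by_cases h : m.1 ∈ A
    · simp [hw', hF, h]
    · have hB : m.1 ∈ B := (Finset.mem_union.mp m.2).resolve_left h
      simp [hw', hF, h, hB]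
  have h2 : ∏ m ∈ A, F m = ∏ m : A, q m.1 (y m.1) (w m) := by
    rw [← Finset.prod_coe_sort A F]
    exact Finset.prod_congr rfl fun m _ => by simp [hF, m.2]
  have h3 : ∏ m ∈ B, F m = ∏ m : B, q m.1 (y m.1) (u m) := by
    rw [← Finset.prod_coe_sort B F]
    refine Finset.prod_congr rfl fun m _ => ?_
    have hnA : m.1 ∉ A := fun hA => (Finset.disjoint_left.mp hAB) hA m.2
    simp [hF, hnA, m.2]
  rw [h1, Finset.prod_union hAB, h2, h3]

variable (p' : (∀ i, 𝒴 i) × V → ℝ) (q : ∀ m, 𝒴 m → 𝒵 m → ℝ)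

lemma sum_collapseV {V : Type*} [Fintype V] (v : V) (C : Prop) [Decidable C] (f : V → ℝ) :
    ∑ x : V, (if C ∧ x = v then f x else 0) = if C then f v else 0 := by
  by_cases h : C
  · rw [if_pos h]
    refine Eq.trans (Finset.sum_congr rfl fun x _ =>
      if_congr (and_iff_right h) rfl rfl) ?_
    rw [Finset.sum_ite_eq' Finset.univ v f]
    exact if_pos (Finset.mem_univ v)
  · rw [if_neg h]
    exact Finset.sum_eq_zero fun x _ => if_neg fun hc => h hc.1

lemma distX_eq (hq1 : ∀ m y, ∑ z, q m y z = 1) (S J : Finset (Fin M'))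
    (ys : ∀ i : S, 𝒴 i.1) (zj : ∀ i : J, 𝒵 i.1) (v : V) :
    _root_.dist (Pjoint p' q) (fun ω => (Ybar S ω, ZbarV J ω)) (ys, zj, v)
      = ∑ y : ∀ i, 𝒴 i, (if (fun i : S => y i.1) = ys then p' (y, v) else 0)
          * ∏ m : J, q m.1 (y m.1) (zj m) := by
  unfold _root_.dist Pjoint Ybar ZbarV
  rw [Fintype.sum_prod_type]
  refine Finset.sum_congr rfl fun y _ => ?_
  rw [Fintype.sum_prod_type]
  dsimp only
  by_cases hA : (fun i : S => y i.1) = ys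
  · rw [if_pos hA]
    trans ∑ z : ∀ i, 𝒵 i, (if (fun i : J => z i.1) = zj
        then p' (y, v) * ∏ m, q m (y m) (z m) else 0)
    · refine Finset.sum_congr rfl fun z _ => ?_
      by_cases hB : (fun i : J => z i.1) = zj
      · rw [if_pos hB]
        trans ∑ x : V, (if x = v then p' (y, x) * ∏ m, q m (y m) (z m) else 0)
        · refine Finset.sum_congr rfl fun x _ => ?_
          rcases eq_or_ne x v with hx | hx
          · subst hx; rw [if_pos rfl, if_pos (by rw [hA, hB])]
          · rw [if_neg hx, if_neg (fun hEq => hx (congrArg (fun p => p.2.2) hEq))]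
        · rw [Finset.sum_ite_eq' Finset.univ v (fun x => p' (y, x) * ∏ m, q m (y m) (z m))]
          exact if_pos (Finset.mem_univ v)
      · rw [if_neg hB]
        exact Finset.sum_eq_zero fun x _ =>
          if_neg fun hEq => hB (congrArg (fun p => p.2.1) hEq)
    · trans ∑ z : ∀ i, 𝒵 i, p' (y, v) * (if (fun i : J => z i.1) = zj
          then ∏ m, q m (y m) (z m) else 0)
      · exact Finset.sum_congr rfl fun z _ => by split_ifs <;> ring
      · rw [← Finset.mul_sum, zsum q hq1 y J zj]
  · rw [if_neg hA, zero_mul]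
    exact Finset.sum_eq_zero fun z _ => Finset.sum_eq_zero fun x _ =>
      if_neg fun hEq => hA (congrArg (fun p => p.1) hEq)

lemma distXW_eq (hq1 : ∀ m y, ∑ z, q m y z = 1) (S J : Finset (Fin M')) (hJS : Disjoint J S)
    (ys : ∀ i : S, 𝒴 i.1) (zj : ∀ i : J, 𝒵 i.1) (v : V) (b : ∀ i : S, 𝒵 i.1) :
    _root_.dist (Pjoint p' q) (fun ω => ((Ybar S ω, ZbarV J ω), Zbar S ω)) ((ys, zj, v), b)
      = ∑ y : ∀ i, 𝒴 i, (if (fun i : S => y i.1) = ys then p' (y, v) else 0)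
          * ((∏ m : J, q m.1 (y m.1) (zj m)) * ∏ m : S, q m.1 (y m.1) (b m)) := by
  unfold _root_.dist Pjoint Ybar Zbar ZbarV
  rw [Fintype.sum_prod_type]
  refine Finset.sum_congr rfl fun y _ => ?_
  rw [Fintype.sum_prod_type]
  dsimp only
  by_cases hA : (fun i : S => y i.1) = ys
  · rw [if_pos hA]
    trans ∑ z : ∀ i, 𝒵 i, (if ((fun i : J => z i.1) = zj ∧ (fun i : S => z i.1) = b)
        then p' (y, v) * ∏ m, q m (y m) (z m) else 0)
    · refine Finset.sum_congr rfl fun z _ => ?_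
      by_cases hB : (fun i : J => z i.1) = zj
      · by_cases hD : (fun i : S => z i.1) = b
        · rw [if_pos ⟨hB, hD⟩]
          trans ∑ x : V, (if x = v then p' (y, x) * ∏ m, q m (y m) (z m) else 0)
          · refine Finset.sum_congr rfl fun x _ => ?_
            rcases eq_or_ne x v with hx | hx
            · subst hx; rw [if_pos rfl, if_pos (by rw [hA, hB, hD])]
            · rw [if_neg hx, if_neg (fun hEq => hx (congrArg (fun p => p.1.2.2) hEq))]
          · rw [Finset.sum_ite_eq' Finset.univ v (fun x => p' (y, x) * ∏ m, q m (y m) (z m))]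
            exact if_pos (Finset.mem_univ v)
        · rw [if_neg (fun hc => hD hc.2)]
          exact Finset.sum_eq_zero fun x _ =>
            if_neg fun hEq => hD (congrArg (fun p => p.2) hEq)
      · rw [if_neg (fun hc => hB hc.1)]
        exact Finset.sum_eq_zero fun x _ =>
          if_neg fun hEq => hB (congrArg (fun p => p.1.2.1) hEq)
    · trans ∑ z : ∀ i, 𝒵 i, p' (y, v)
          * (if ((fun i : J => z i.1) = zj ∧ (fun i : S => z i.1) = b)
            then ∏ m, q m (y m) (z m) else 0)
      · exact Finset.sum_congr rfl fun z _ => by split_ifs <;> ring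
      · rw [← Finset.mul_sum, zsum2 q hq1 y J S hJS zj b]
  · rw [if_neg hA, zero_mul]
    exact Finset.sum_eq_zero fun z _ => Finset.sum_eq_zero fun x _ =>
      if_neg fun hEq => hA (congrArg (fun p => p.1.1) hEq)

lemma Pjoint_nonneg (hp'0 : ∀ yv, 0 ≤ p' yv) (hq0 : ∀ m y z, 0 ≤ q m y z) :
    ∀ ω, 0 ≤ Pjoint p' q ω := fun _ =>
  mul_nonneg (hp'0 _) (Finset.prod_nonneg fun _ _ => hq0 _ _ _)

lemma Pjoint_q_ne_zero (ω : Samp 𝒴 𝒵 V) (h : Pjoint p' q ω ≠ 0) (m : Fin M') :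
    q m (ω.1 m) (ω.2.1 m) ≠ 0 := by
  intro h0
  exact h (by rw [Pjoint, Finset.prod_eq_zero (Finset.mem_univ m) h0, mul_zero])

lemma Hent_congr {Ω α : Type*} [Fintype Ω] [Fintype α] (P : Ω → ℝ) (X Y : Ω → α)
    (h : ∀ ω, X ω = Y ω) : Hent P X = Hent P Y := by
  rw [show X = Y from funext h]

lemma key_lemma (hp'0 : ∀ yv, 0 ≤ p' yv) (hq0 : ∀ m y z, 0 ≤ q m y z)
    (hq1 : ∀ m y, ∑ z, q m y z = 1) (S J : Finset (Fin M')) (hJS : Disjoint J S) :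
    Hent (Pjoint p' q) (fun ω => (Ybar S ω, Zbar S ω, ZbarV J ω))
      = Hent (Pjoint p' q) (fun ω => (Ybar S ω, ZbarV J ω))
        - ∑ m ∈ S, ∑ ω, Pjoint p' q ω * Real.logb 2 (q m (ω.1 m) (ω.2.1 m)) := by
  have hfac : ∀ (a : (∀ i : S, 𝒴 i.1) × ((∀ i : J, 𝒵 i.1) × V)) (b : ∀ i : S, 𝒵 i.1),
      _root_.dist (Pjoint p' q) (fun ω => ((Ybar S ω, ZbarV J ω), Zbar S ω)) (a, b)
        = _root_.dist (Pjoint p' q) (fun ω => (Ybar S ω, ZbarV J ω)) a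
          * ∏ m : S, q m.1 (a.1 m) (b m) := by
    rintro ⟨ys, zj, v⟩ b
    rw [distXW_eq p' q hq1 S J hJS, distX_eq p' q hq1 S J, Finset.sum_mul]
    refine Finset.sum_congr rfl fun y _ => ?_
    by_cases hS : (fun i : S => y i.1) = ys
    · have hyb : ∏ m : S, q m.1 (y m.1) (b m) = ∏ m : S, q m.1 (ys m) (b m) := by
        refine Finset.prod_congr rfl fun m _ => ?_
        rw [← congrFun hS m]
      rw [hyb]; ring
    · rw [if_neg hS, zero_mul, zero_mul, zero_mul]
  have hpair := Hent_pair' (Pjoint p' q) (Pjoint_nonneg p' q hp'0 hq0)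
    (fun ω => (Ybar S ω, ZbarV J ω)) (Zbar S)
    (fun a b => ∏ m : S, q m.1 (a.1 m) (b m)) hfac
  have reshape : Hent (Pjoint p' q) (fun ω => (Ybar S ω, Zbar S ω, ZbarV J ω))
      = Hent (Pjoint p' q) (fun ω =>
          ((fun x : ((∀ i : S, 𝒴 i.1) × ((∀ i : J, 𝒵 i.1) × V)) × (∀ i : S, 𝒵 i.1) =>
            (x.1.1, x.2, x.1.2)) ((Ybar S ω, ZbarV J ω), Zbar S ω))) :=
    Hent_congr _ _ _ fun ω => rfl
  have he : Function.Injective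
      (fun x : ((∀ i : S, 𝒴 i.1) × ((∀ i : J, 𝒵 i.1) × V)) × (∀ i : S, 𝒵 i.1) =>
        (x.1.1, x.2, x.1.2)) := by
    rintro ⟨⟨a, c⟩, b⟩ ⟨⟨a', c'⟩, b'⟩ h
    simp only [Prod.mk.injEq] at h ⊢
    exact ⟨⟨h.1, h.2.2⟩, h.2.1⟩
  rw [reshape, Hent_comp_inj (Pjoint p' q)
    (fun ω => ((Ybar S ω, ZbarV J ω), Zbar S ω)) _ he, hpair]
  congr 1
  conv_rhs => rw [Finset.sum_comm]
  refine Finset.sum_congr rfl fun ω _ => ?_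
  dsimp only [Ybar, Zbar]
  rw [Finset.prod_coe_sort S (fun m => q m (ω.1 m) (ω.2.1 m))]
  rcases eq_or_ne (Pjoint p' q ω) 0 with h | h
  · simp [h]
  rw [Real.logb_prod _ _ (fun m _ => Pjoint_q_ne_zero p' q ω h m), Finset.mul_sum]

lemma HentR (P : Samp 𝒴 𝒵 V → ℝ) (A B : Finset (Fin M')) :
    Hent P (fun ω => (Zbar A ω, ZbarV B ω)) = Hent P (ZbarV (A ∪ B)) := by
  have he : Function.Injective
      (fun x : (∀ i : (A ∪ B : Finset (Fin M')), 𝒵 i.1) × V =>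
        ((fun i : A => x.1 ⟨i.1, Finset.mem_union_left _ i.2⟩),
          ((fun i : B => x.1 ⟨i.1, Finset.mem_union_right _ i.2⟩), x.2))) := by
    rintro ⟨f, v⟩ ⟨f', v'⟩ h
    simp only [Prod.mk.injEq] at h
    refine Prod.ext ?_ h.2.2
    funext i
    rcases Finset.mem_union.mp i.2 with hA | hB
    · exact congrFun h.1 ⟨i.1, hA⟩
    · exact congrFun h.2.1 ⟨i.1, hB⟩
  have reshape : Hent P (fun ω => (Zbar A ω, ZbarV B ω))
      = Hent P (fun ω =>
          (fun x : (∀ i : (A ∪ B : Finset (Fin M')), 𝒵 i.1) × V =>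
            ((fun i : A => x.1 ⟨i.1, Finset.mem_union_left _ i.2⟩),
              ((fun i : B => x.1 ⟨i.1, Finset.mem_union_right _ i.2⟩), x.2)))
            (ZbarV (A ∪ B) ω)) :=
    Hent_congr _ _ _ fun ω => rfl
  rw [reshape, Hent_comp_inj P (ZbarV (A ∪ B)) _ he]

end YZVAux

/-- Corollary B.3 (cor:chain1) of the paper: for nonempty `Î ⊆ {1,…,M'}` and disjoint
nonempty `I, I' ⊆ Î`,
`I(Ȳ_{I∪I'}; Z̄_{I∪I'} | Z̄_{Î\(I∪I')}, V)
  = I(Ȳ_I; Z̄_I | Z̄_{Î\(I∪I')}, V) + I(Ȳ_{I'}; Z̄_{I'} | Z̄_{Î\I'}, V)`. -/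
theorem statement_5 (M' : ℕ) (𝒴 𝒵 : Fin M' → Type) [∀ i, Fintype (𝒴 i)]
    [∀ i, Fintype (𝒵 i)] (V : Type) [Fintype V]
    (p' : (∀ i, 𝒴 i) × V → ℝ) (q : ∀ m, 𝒴 m → 𝒵 m → ℝ)
    (hp'0 : ∀ yv, 0 ≤ p' yv) (hp'1 : ∑ yv, p' yv = 1)
    (hq0 : ∀ m y z, 0 ≤ q m y z) (hq1 : ∀ m y, ∑ z, q m y z = 1)
    (Ihat I I' : Finset (Fin M')) (hIhat : Ihat.Nonempty)
    (hIsub : I ⊆ Ihat) (hI'sub : I' ⊆ Ihat)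
    (hI : I.Nonempty) (hI' : I'.Nonempty) (hII' : Disjoint I I') :
    condMI (Pjoint p' q) (Ybar (I ∪ I')) (Zbar (I ∪ I')) (ZbarV (Ihat \ (I ∪ I')))
      = condMI (Pjoint p' q) (Ybar I) (Zbar I) (ZbarV (Ihat \ (I ∪ I')))
        + condMI (Pjoint p' q) (Ybar I') (Zbar I') (ZbarV (Ihat \ I')) := by
  classical
  set U := I ∪ I' with hU
  set J := Ihat \ (I ∪ I') with hJ
  have hJU : Disjoint J U := Finset.sdiff_disjoint
  have hJI : Disjoint J I := hJU.mono_right Finset.subset_union_left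
  have hIJdisj : Disjoint (I ∪ J) I' := by
    refine Finset.disjoint_union_left.mpr ⟨hII', ?_⟩
    exact Finset.sdiff_disjoint.mono_right Finset.subset_union_right
  have hUJ : U ∪ J = Ihat :=
    Finset.union_sdiff_of_subset (Finset.union_subset hIsub hI'sub)
  have hJ'eq : Ihat \ I' = I ∪ J := by
    ext a
    simp only [hJ, Finset.mem_sdiff, Finset.mem_union]
    have h1 : a ∈ I → a ∈ Ihat := fun h => hIsub h
    have h2 : a ∈ I → a ∉ I' := fun h h' => Finset.disjoint_left.mp hII' h h'
    tauto
  have hI'IJ : I' ∪ (I ∪ J) = Ihat := by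
    rw [← hJ'eq]
    exact Finset.union_sdiff_of_subset hI'sub
  rw [hJ'eq]
  simp only [condMI]
  have e1 := key_lemma p' q hp'0 hq0 hq1 U J hJU
  have e2 := key_lemma p' q hp'0 hq0 hq1 I J hJI
  have e3 := key_lemma p' q hp'0 hq0 hq1 I' (I ∪ J) hIJdisj
  have r1 : Hent (Pjoint p' q) (fun ω => (Zbar U ω, ZbarV J ω))
      = Hent (Pjoint p' q) (ZbarV Ihat) := (HentR (Pjoint p' q) U J).trans (by rw [hUJ])
  have r2 : Hent (Pjoint p' q) (fun ω => (Zbar I' ω, ZbarV (I ∪ J) ω))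
      = Hent (Pjoint p' q) (ZbarV Ihat) :=
    (HentR (Pjoint p' q) I' (I ∪ J)).trans (by rw [hI'IJ])
  have r3 : Hent (Pjoint p' q) (fun ω => (Zbar I ω, ZbarV J ω))
      = Hent (Pjoint p' q) (ZbarV (I ∪ J)) := HentR (Pjoint p' q) I J
  have hsum : ∑ m ∈ U, ∑ ω, Pjoint p' q ω * Real.logb 2 (q m (ω.1 m) (ω.2.1 m))
      = (∑ m ∈ I, ∑ ω, Pjoint p' q ω * Real.logb 2 (q m (ω.1 m) (ω.2.1 m)))
        + ∑ m ∈ I', ∑ ω, Pjoint p' q ω * Real.logb 2 (q m (ω.1 m) (ω.2.1 m)) :=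
    Finset.sum_union hII'
  rw [e1, e2, e3, r1, r2, ← r3, hsum]
  ring
end
end
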